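/- Let X₁, …, X_n be independent ℝ^d-valued random vectors with E[X_i] = 0, Σᵢ E|X_i|² < ∞, and Var(Σᵢ X_i) = I_d. Set W = Σᵢ X_i and W_i = W − X_i. Then for every continuously differentiable F : ℝ^d → ℝ^d with bounded derivative, E[⟨F(W), W⟩] = Σᵢ ∫₀¹ E[⟨∇F(W_i + t·X_i), X_i ⊗ X_i⟩] dt, where ⟨∇F(w), x ⊗ x⟩ = ⟨∇F(w)x, x⟩ denotes the quadratic form of the Jacobian. -/

import Mathlib

open MeasureTheory ProbabilityTheory RealInnerProductSpace intervalIntegral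

lemma ftc_aux {d : ℕ} {F : EuclideanSpace ℝ (Fin d) → EuclideanSpace ℝ (Fin d)}
    (hF : ContDiff ℝ 1 F) (w x : EuclideanSpace ℝ (Fin d)) :
    ⟪F (w + x) - F w, x⟫ = ∫ t in (0:ℝ)..1, ⟪fderiv ℝ F (w + t • x) x, x⟫ := by
  have hcont : Continuous fun t : ℝ => fderiv ℝ F (w + t • x) x :=
    ((hF.continuous_fderiv one_ne_zero).comp (by continuity)).clm_apply continuous_const
  have hderiv : ∀ t ∈ Set.uIcc (0:ℝ) 1, HasDerivAt (fun t : ℝ => F (w + t • x))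
      (fderiv ℝ F (w + t • x) x) t := by
    intro t _
    have h1 : HasFDerivAt F (fderiv ℝ F (w + t • x)) (w + t • x) :=
      (hF.differentiable one_ne_zero _).hasFDerivAt
    have h2 : HasDerivAt (fun t : ℝ => w + t • x) x t := by
      simpa using ((hasDerivAt_id t).smul_const x).const_add w
    exact h1.comp_hasDerivAt t h2
  have key := intervalIntegral.integral_eq_sub_of_hasDerivAt hderiv
    (hcont.intervalIntegrable 0 1)
  calc ⟪F (w + x) - F w, x⟫
      = (innerSL ℝ x) (∫ t in (0:ℝ)..1, fderiv ℝ F (w + t • x) x) := by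
        rw [key]
        simp only [one_smul, zero_smul, add_zero, innerSL_apply_apply]
        exact real_inner_comm _ _
    _ = ∫ t in (0:ℝ)..1, (innerSL ℝ x) (fderiv ℝ F (w + t • x) x) :=
        ((innerSL ℝ x).intervalIntegral_comp_comm (hcont.intervalIntegrable 0 1)).symm
    _ = ∫ t in (0:ℝ)..1, ⟪fderiv ℝ F (w + t • x) x, x⟫ := by
        refine intervalIntegral.integral_congr fun t _ => ?_
        simp only [innerSL_apply_apply]
        exact real_inner_comm _ _

theorem stmt12 {d n : ℕ} {Ω : Type*} [MeasurableSpace Ω] (P : Measure Ω)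
    [IsProbabilityMeasure P]
    (X : Fin n → Ω → EuclideanSpace ℝ (Fin d))
    (hXm : ∀ i, Measurable (X i))
    (hindep : iIndepFun X P)
    (hX2 : ∀ i, Integrable (fun ω => ‖X i ω‖ ^ 2) P)
    (hmean : ∀ i, ∫ ω, X i ω ∂P = 0)
    (hcov : ∀ k l, (∑ i, ∫ ω, X i ω k * X i ω l ∂P) = if k = l then 1 else 0)
    (W : Ω → EuclideanSpace ℝ (Fin d)) (hW : ∀ ω, W ω = ∑ i, X i ω)
    (F : EuclideanSpace ℝ (Fin d) → EuclideanSpace ℝ (Fin d))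
    (hF : ContDiff ℝ 1 F) (hF' : ∃ C, ∀ w, ‖fderiv ℝ F w‖ ≤ C) :
    ∫ ω, ⟪F (W ω), W ω⟫ ∂P =
      ∑ i, ∫ t in (0:ℝ)..1,
        ∫ ω, ⟪fderiv ℝ F (W ω - X i ω + t • X i ω) (X i ω), X i ω⟫ ∂P := by
  obtain ⟨C₀, hC₀⟩ := hF'
  set C : ℝ := max C₀ 0 with hCdef
  have hC : ∀ w, ‖fderiv ℝ F w‖ ≤ C := fun w => (hC₀ w).trans (le_max_left _ _)
  have hCnn : (0:ℝ) ≤ C := le_max_right _ _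
  have hFc : Continuous F := hF.continuous
  have hf'c : Continuous (fderiv ℝ F) := hF.continuous_fderiv one_ne_zero
  have hWm : Measurable W := by
    have : W = fun ω => ∑ i, X i ω := funext hW
    rw [this]; exact Finset.measurable_sum _ fun i _ => hXm i
  have hlip : ∀ a b : EuclideanSpace ℝ (Fin d), ‖F a - F b‖ ≤ C * ‖a - b‖ := fun a b =>
    convex_univ.norm_image_sub_le_of_norm_fderiv_le
      (fun x _ => (hF.differentiable one_ne_zero x)) (fun x _ => hC x) trivial trivial
  have hgrow : ∀ w, ‖F w‖ ≤ ‖F 0‖ + C * ‖w‖ := by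
    intro w
    have h := hlip w 0
    rw [sub_zero] at h
    calc ‖F w‖ = ‖F w - F 0 + F 0‖ := by rw [sub_add_cancel]
      _ ≤ ‖F w - F 0‖ + ‖F 0‖ := norm_add_le _ _
      _ ≤ ‖F 0‖ + C * ‖w‖ := by linarith
  have hXi_int : ∀ i, Integrable (X i) P := by
    intro i
    refine Integrable.mono' ((integrable_const 1).add (hX2 i))
      (hXm i).aestronglyMeasurable (ae_of_all _ fun ω => ?_)
    simp only [Pi.add_apply]
    nlinarith [sq_nonneg (‖X i ω‖ - 1), norm_nonneg (X i ω)]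
  have hXknorm : ∀ i, Integrable (fun ω => ‖X i ω‖) P := fun i => (hXi_int i).norm
  have hnormprod : ∀ i j, Integrable (fun ω => ‖X j ω‖ * ‖X i ω‖) P := by
    intro i j
    refine Integrable.mono' ((hX2 j).add (hX2 i))
      ((hXm j).norm.mul (hXm i).norm).aestronglyMeasurable (ae_of_all _ fun ω => ?_)
    simp only [Pi.add_apply]
    rw [norm_mul, norm_norm, norm_norm]
    nlinarith [sq_nonneg (‖X j ω‖ - ‖X i ω‖), norm_nonneg (X j ω), norm_nonneg (X i ω)]
  have hsumnorm : Integrable (fun ω => ∑ j, ‖X j ω‖) P :=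
    integrable_finset_sum _ fun j _ => hXknorm j
  have hWnorm : ∀ ω, ‖W ω‖ ≤ ∑ j, ‖X j ω‖ := fun ω => by
    rw [hW ω]; exact norm_sum_le _ _
  have hWi_eq : ∀ (i : Fin n) ω, W ω - X i ω = ∑ j ∈ Finset.univ.erase i, X j ω := by
    intro i ω
    rw [hW ω, ← Finset.add_sum_erase _ _ (Finset.mem_univ i), add_sub_cancel_left]
  have hWinorm : ∀ (i : Fin n) ω, ‖W ω - X i ω‖ ≤ ∑ j, ‖X j ω‖ := by
    intro i ω
    rw [hWi_eq i ω]
    calc ‖∑ j ∈ Finset.univ.erase i, X j ω‖ ≤ ∑ j ∈ Finset.univ.erase i, ‖X j ω‖ :=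
          norm_sum_le _ _
      _ ≤ ∑ j, ‖X j ω‖ := Finset.sum_le_sum_of_subset_of_nonneg (Finset.subset_univ _)
          (fun j _ _ => norm_nonneg _)
  -- general integrability of ⟪F ∘ v, X i⟫
  have hkey : ∀ (v : Ω → EuclideanSpace ℝ (Fin d)), Measurable v →
      (∀ ω, ‖v ω‖ ≤ ∑ j, ‖X j ω‖) → ∀ i,
      Integrable (fun ω => ⟪F (v ω), X i ω⟫) P := by
    intro v hvm hvb i
    refine Integrable.mono' (((hXknorm i).const_mul ‖F 0‖).add
      (((integrable_finset_sum Finset.univ fun j _ => hnormprod i j)).const_mul C))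
      ((hFc.measurable.comp hvm).inner (hXm i)).aestronglyMeasurable
      (ae_of_all _ fun ω => ?_)
    simp only [Pi.add_apply]
    calc ‖⟪F (v ω), X i ω⟫‖ ≤ ‖F (v ω)‖ * ‖X i ω‖ := norm_inner_le_norm _ _
      _ ≤ (‖F 0‖ + C * ‖v ω‖) * ‖X i ω‖ :=
          mul_le_mul_of_nonneg_right (hgrow _) (norm_nonneg _)
      _ ≤ ‖F 0‖ * ‖X i ω‖ + C * ∑ j, ‖X j ω‖ * ‖X i ω‖ := by
          rw [← Finset.sum_mul, add_mul, mul_assoc]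
          gcongr
          exact hvb ω
  have hint1 : ∀ i, Integrable (fun ω => ⟪F (W ω), X i ω⟫) P := hkey W hWm hWnorm
  have hint2 : ∀ i, Integrable (fun ω => ⟪F (W ω - X i ω), X i ω⟫) P := fun i =>
    hkey (fun ω => W ω - X i ω) (hWm.sub (hXm i)) (hWinorm i) i
  -- step A
  have hsumA : ∫ ω, ⟪F (W ω), W ω⟫ ∂P = ∑ i, ∫ ω, ⟪F (W ω), X i ω⟫ ∂P := by
    have h : ∀ ω, ⟪F (W ω), W ω⟫ = ∑ i, ⟪F (W ω), X i ω⟫ := by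
      intro ω
      rw [hW ω, inner_sum]
    simp_rw [h]
    exact integral_finset_sum _ fun i _ => hint1 i
  -- step B : zero mean of ⟪F(W - X i), X i⟫
  have hzero : ∀ i, ∫ ω, ⟪F (W ω - X i ω), X i ω⟫ ∂P = 0 := by
    intro i
    have hGm : Measurable (fun ω => F (W ω - X i ω)) := hFc.measurable.comp (hWm.sub (hXm i))
    have hGint : Integrable (fun ω => F (W ω - X i ω)) P := by
      refine Integrable.mono' ((integrable_const ‖F 0‖).add (hsumnorm.const_mul C))
        hGm.aestronglyMeasurable (ae_of_all _ fun ω => ?_)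
      simp only [Pi.add_apply]
      calc ‖F (W ω - X i ω)‖ ≤ ‖F 0‖ + C * ‖W ω - X i ω‖ := hgrow _
        _ ≤ ‖F 0‖ + C * ∑ j, ‖X j ω‖ := by gcongr; exact hWinorm i ω
    have hindep_i : IndepFun (fun ω => W ω - X i ω) (X i) P := by
      have h := hindep.indepFun_finsetSum_of_notMem hXm (Finset.notMem_erase i Finset.univ)
      have he : (fun ω => W ω - X i ω) = ∑ j ∈ Finset.univ.erase i, X j := by
        funext ω
        rw [hWi_eq i ω]
        simp [Finset.sum_apply]
      rw [he]
      exact h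
    have hev : ∀ k : Fin d, Measurable (fun v : EuclideanSpace ℝ (Fin d) => v k) := fun k =>
      (EuclideanSpace.proj (𝕜 := ℝ) k).continuous.measurable
    simp_rw [PiLp.inner_apply, RCLike.inner_apply, conj_trivial]
    have h1 : ∀ k, Integrable (fun ω => F (W ω - X i ω) k) P := fun k =>
      (EuclideanSpace.proj (𝕜 := ℝ) k).integrable_comp hGint
    have h2 : ∀ k, Integrable (fun ω => X i ω k) P := fun k =>
      (EuclideanSpace.proj (𝕜 := ℝ) k).integrable_comp (hXi_int i)
    have hik : ∀ k, IndepFun (fun ω => F (W ω - X i ω) k) (fun ω => X i ω k) P := fun k => by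
      have h := hindep_i.comp ((hev k).comp hFc.measurable) (hev k)
      simpa [Function.comp_def] using h
    have hisum := integral_finset_sum (μ := P) Finset.univ
      (f := fun (k : Fin d) ω => F (W ω - X i ω) k * X i ω k)
      (fun k _ => (hik k).integrable_mul (h1 k) (h2 k))
    have hc : ∀ ω x, X i ω x * F (W ω - X i ω) x = F (W ω - X i ω) x * X i ω x :=
      fun _ _ => mul_comm _ _
    simp_rw [hc]
    rw [hisum]
    refine Finset.sum_eq_zero fun k _ => ?_
    have hmean_k : ∫ ω, X i ω k ∂P = 0 := by
      have := (EuclideanSpace.proj (𝕜 := ℝ) k).integral_comp_comm (hXi_int i)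
      rw [hmean i] at this
      simpa using this
    have := (hik k).integral_mul_eq_mul_integral (h1 k).aestronglyMeasurable (h2 k).aestronglyMeasurable
    simpa [Pi.mul_apply, hmean_k] using this
  -- assemble per-i before Fubini
  rw [hsumA]
  refine Finset.sum_congr rfl fun i _ => ?_
  have hftc : ∀ ω, ⟪F (W ω), X i ω⟫ - ⟪F (W ω - X i ω), X i ω⟫ =
      ∫ t in (0:ℝ)..1, ⟪fderiv ℝ F (W ω - X i ω + t • X i ω) (X i ω), X i ω⟫ := by
    intro ω
    rw [← inner_sub_left]
    have := ftc_aux hF (W ω - X i ω) (X i ω)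
    rwa [sub_add_cancel] at this
  have hBC : ∫ ω, ⟪F (W ω), X i ω⟫ ∂P =
      ∫ ω, (∫ t in (0:ℝ)..1,
        ⟪fderiv ℝ F (W ω - X i ω + t • X i ω) (X i ω), X i ω⟫) ∂P := by
    calc ∫ ω, ⟪F (W ω), X i ω⟫ ∂P
        = (∫ ω, ⟪F (W ω), X i ω⟫ ∂P) - ∫ ω, ⟪F (W ω - X i ω), X i ω⟫ ∂P := by
          rw [hzero i, sub_zero]
      _ = ∫ ω, (⟪F (W ω), X i ω⟫ - ⟪F (W ω - X i ω), X i ω⟫) ∂P :=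
          (integral_sub (hint1 i) (hint2 i)).symm
      _ = ∫ ω, (∫ t in (0:ℝ)..1,
            ⟪fderiv ℝ F (W ω - X i ω + t • X i ω) (X i ω), X i ω⟫) ∂P := by
          refine MeasureTheory.integral_congr_ae ?_
          filter_upwards with ω
          exact hftc ω
  rw [hBC]
  -- Fubini
  set ν : Measure ℝ := volume.restrict (Set.Ioc (0:ℝ) 1) with hνdef
  haveI : IsProbabilityMeasure ν := by
    constructor
    rw [hνdef, Measure.restrict_apply_univ, Real.volume_Ioc]
    norm_num
  have hbd : ∀ (ω : Ω) (t : ℝ),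
      ‖⟪fderiv ℝ F (W ω - X i ω + t • X i ω) (X i ω), X i ω⟫‖ ≤ C * ‖X i ω‖ ^ 2 := by
    intro ω t
    calc ‖⟪fderiv ℝ F (W ω - X i ω + t • X i ω) (X i ω), X i ω⟫‖
        ≤ ‖fderiv ℝ F (W ω - X i ω + t • X i ω) (X i ω)‖ * ‖X i ω‖ := norm_inner_le_norm _ _
      _ ≤ (C * ‖X i ω‖) * ‖X i ω‖ := by
          refine mul_le_mul_of_nonneg_right ?_ (norm_nonneg _)
          exact (ContinuousLinearMap.le_opNorm _ _).trans
            (mul_le_mul_of_nonneg_right (hC _) (norm_nonneg _))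
      _ = C * ‖X i ω‖ ^ 2 := by ring
  have hm1 : Measurable (fun p : Ω × ℝ => W p.1 - X i p.1 + p.2 • X i p.1) := by
    refine ((hWm.comp measurable_fst).sub ((hXm i).comp measurable_fst)).add ?_
    exact continuous_smul.measurable.comp
      (measurable_snd.prodMk ((hXm i).comp measurable_fst))
  have hm3 : Measurable (fun p : Ω × ℝ =>
      ⟪fderiv ℝ F (W p.1 - X i p.1 + p.2 • X i p.1) (X i p.1), X i p.1⟫) := by
    refine Measurable.inner ?_ ((hXm i).comp measurable_fst)
    exact isBoundedBilinearMap_apply.continuous.measurable.comp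
      ((hf'c.measurable.comp hm1).prodMk ((hXm i).comp measurable_fst))
  have hprodm : AEStronglyMeasurable (fun p : Ω × ℝ =>
      ⟪fderiv ℝ F (W p.1 - X i p.1 + p.2 • X i p.1) (X i p.1), X i p.1⟫) (P.prod ν) :=
    hm3.aestronglyMeasurable
  have hcont_t : ∀ ω, Continuous fun t : ℝ =>
      ⟪fderiv ℝ F (W ω - X i ω + t • X i ω) (X i ω), X i ω⟫ := fun ω =>
    (((hf'c.comp (continuous_const.add (continuous_id.smul continuous_const))).clm_apply continuous_const).inner continuous_const)
  have hInt : Integrable (Function.uncurry fun ω t =>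
      ⟪fderiv ℝ F (W ω - X i ω + t • X i ω) (X i ω), X i ω⟫) (P.prod ν) := by
    have huc : (Function.uncurry fun ω t =>
        ⟪fderiv ℝ F (W ω - X i ω + t • X i ω) (X i ω), X i ω⟫) = fun p : Ω × ℝ =>
        ⟪fderiv ℝ F (W p.1 - X i p.1 + p.2 • X i p.1) (X i p.1), X i p.1⟫ := rfl
    rw [huc, integrable_prod_iff hprodm]
    constructor
    · refine ae_of_all _ fun ω => ?_
      exact Integrable.mono' (integrable_const (C * ‖X i ω‖ ^ 2))
        (hcont_t ω).aestronglyMeasurable (ae_of_all _ fun t => hbd ω t)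
    · refine Integrable.mono' ((hX2 i).const_mul C)
        (hprodm.norm.integral_prod_right') (ae_of_all _ fun ω => ?_)
      have h := norm_integral_le_of_norm_le_const
        (C := C * ‖X i ω‖ ^ 2) (μ := ν)
        (f := fun t => ‖⟪fderiv ℝ F (W ω - X i ω + t • X i ω) (X i ω), X i ω⟫‖)
        (ae_of_all _ fun t => by simpa using hbd ω t)
      simpa [measure_univ] using h
  have hswap := integral_integral_swap hInt
  simp only [intervalIntegral.integral_of_le (zero_le_one (α := ℝ))]
  exact hswap
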